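/- Let p ≥ 5 be a prime and let a be a real number with √p < a ≤ 2√p. Set C = p - a. Then the equation 1 - a·p^{-s}/(p² - C) = 0 has a real solution s₀, namely s₀ = -3/2 + log(r)/log(p) where b = a·p^{-1/2} and r = b/(1 - p^{-1} + b·p^{-3/2}), and this solution satisfies -3/2 < s₀ < -3/2 + log(3)/log(p). In particular s₀ → -3/2 as p → ∞ along primes with √p < a_p ≤ 2√p. -/

import Mathlib

/-- Local zeros approaching the candidate natural boundary: for a prime `p ≥ 5` and
`√p < a ≤ 2√p`, with `C = p - a`, `b = a·p^{-1/2}`, `r = b/(1-p⁻¹+b·p^{-3/2})` and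
`s₀ = -3/2 + log r / log p`, one has `1 - a·p^{-s₀}/(p²-C) = 0` and
`-3/2 < s₀ < -3/2 + log 3 / log p` (so `s₀ → -3/2` as `p → ∞`). -/
theorem local_zero_near_boundary
    (p : ℕ) (hp : p.Prime) (hp5 : 5 ≤ p) (a : ℝ)
    (ha1 : Real.sqrt p < a) (ha2 : a ≤ 2 * Real.sqrt p)
    (C b r s₀ : ℝ)
    (hC : C = (p : ℝ) - a)
    (hb : b = a * (p : ℝ) ^ (-(1 : ℝ) / 2))
    (hr : r = b / (1 - (p : ℝ)⁻¹ + b * (p : ℝ) ^ (-(3 : ℝ) / 2)))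
    (hs : s₀ = -(3 / 2) + Real.log r / Real.log p) :
    1 - a * (p : ℝ) ^ (-s₀) / ((p : ℝ) ^ 2 - C) = 0 ∧
    -(3 / 2) < s₀ ∧ s₀ < -(3 / 2) + Real.log 3 / Real.log p := by
  have hP5 : (5:ℝ) ≤ (p:ℝ) := by exact_mod_cast hp5
  have hP0 : (0:ℝ) < (p:ℝ) := by linarith
  have hsq0 : 0 < Real.sqrt p := Real.sqrt_pos.mpr hP0
  have ha0 : 0 < a := lt_trans hsq0 ha1
  have hss : Real.sqrt p * Real.sqrt p = (p:ℝ) := Real.mul_self_sqrt hP0.le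
  have hq2 : 2 < Real.sqrt p := by nlinarith [hss, hsq0, hP5]
  have hD : 0 < (p:ℝ)^2 - (p:ℝ) + a := by nlinarith
  have h12 : (p:ℝ) ^ ((1:ℝ)/2) = Real.sqrt p := by
    rw [Real.sqrt_eq_rpow]
  have hhalf : (p:ℝ) ^ (-(1:ℝ)/2) = (Real.sqrt p)⁻¹ := by
    rw [neg_div, Real.rpow_neg hP0.le, h12]
  have h32 : (p:ℝ) ^ ((3:ℝ)/2) = (p:ℝ) * Real.sqrt p := by
    have h3 : (3:ℝ)/2 = 1 + 1/2 := by norm_num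
    rw [h3, Real.rpow_add hP0, Real.rpow_one, h12]
  have h32n : (p:ℝ) ^ (-(3:ℝ)/2) = ((p:ℝ) * Real.sqrt p)⁻¹ := by
    rw [neg_div, Real.rpow_neg hP0.le, h32]
  have hPne : (p:ℝ) ≠ 0 := hP0.ne'
  have hsne : Real.sqrt p ≠ 0 := hsq0.ne'
  have hDne : (p:ℝ)^2 - (p:ℝ) + a ≠ 0 := hD.ne'
  have h1 : Real.sqrt p * ((p:ℝ) * Real.sqrt p) = (p:ℝ)^2 :=
    by linear_combination (p:ℝ) * hss
  have hden : 1 - (p:ℝ)⁻¹ + a * (Real.sqrt p)⁻¹ * ((p:ℝ) * Real.sqrt p)⁻¹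
      = ((p:ℝ)^2 - (p:ℝ) + a) / ((p:ℝ)^2) := by
    rw [mul_assoc, ← mul_inv, h1]
    field_simp
  have hrval : r = a * ((p:ℝ) * Real.sqrt p) / ((p:ℝ)^2 - (p:ℝ) + a) := by
    rw [hr, hb, hhalf, h32n, hden, div_div_eq_mul_div]
    congr 1
    field_simp
    linear_combination -hss
  have hr0 : 0 < r := by rw [hrval]; positivity
  have hP1 : (1:ℝ) < (p:ℝ) := by linarith
  have hlogp : 0 < Real.log p := Real.log_pos hP1
  have hps : (p:ℝ) ^ (-s₀) = (p:ℝ) ^ ((3:ℝ)/2) / r := by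
    rw [hs]
    have hsplit : -(-(3/2) + Real.log r / Real.log p)
        = (3:ℝ)/2 + (-(Real.log r / Real.log p)) := by ring
    rw [hsplit, Real.rpow_add hP0, Real.rpow_neg hP0.le]
    congr 1
    rw [Real.log_div_log, Real.rpow_logb hP0 (by linarith) hr0]
  have h2 : (p:ℝ) * Real.sqrt p * Real.sqrt p = (p:ℝ)^2 := by
    linear_combination (p:ℝ) * hss
  have h3 : 2 * Real.sqrt p < (p:ℝ) := by
    nlinarith [mul_pos hsq0 (sub_pos.mpr hq2), hss]
  have hps0 : 0 < (p:ℝ) * Real.sqrt p := mul_pos hP0 hsq0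
  have h6 : (p:ℝ)^2 < a * ((p:ℝ) * Real.sqrt p) := by
    rw [← h1]
    exact mul_lt_mul_of_pos_right ha1 hps0
  have hr1 : 1 < r := by
    rw [hrval, lt_div_iff₀ hD]
    linarith [h6, h3, ha2]
  have h4 : a * ((p:ℝ) * Real.sqrt p) ≤ 2 * (p:ℝ)^2 := by
    have := mul_le_mul_of_nonneg_right ha2 hps0.le
    linear_combination this + 2 * h1
  have h5 : 2 * (p:ℝ)^2 < 3 * ((p:ℝ)^2 - (p:ℝ) + a) := by
    have hpp : (5:ℝ) * (p:ℝ) ≤ (p:ℝ)^2 := by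
      have := mul_le_mul_of_nonneg_right hP5 hP0.le
      linear_combination this
    linarith [hpp, ha0, hP5]
  have hr3 : r < 3 := by
    rw [hrval, div_lt_iff₀ hD]
    linarith [h4, h5]
  refine ⟨?_, ?_, ?_⟩
  · rw [hps, hC, hrval, h32]
    have h2 : (p:ℝ)^2 - ((p:ℝ) - a) = (p:ℝ)^2 - (p:ℝ) + a := by ring
    rw [h2]
    field_simp
    rw [div_self (ne_of_gt (by nlinarith [hD] : (0:ℝ) < (p:ℝ) * ((p:ℝ) - 1) + a)), sub_self]
  · rw [hs]
    have := div_pos (Real.log_pos hr1) hlogp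
    linarith
  · rw [hs]
    have hlr : Real.log r < Real.log 3 := Real.log_lt_log hr0 hr3
    gcongr
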